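/- Intermediate step in the proof of Wall's theorem: Let a : ℕ → ℝ be a Hausdorff moment sequence with a_0 = 1, and define b_n = Σ_{k : 2k ≤ n} C(n, 2k) a_k (the 1-binomial transform of the aerated sequence of a). Then b is a Stieltjes moment sequence whose representing measure is supported on [0,2]. -/

import Mathlib

open MeasureTheory

lemma aux_even_sum (n : ℕ) (t : ℝ) :
    ∑ k ∈ Finset.range (n / 2 + 1), (n.choose (2 * k) : ℝ) * t ^ (2 * k)
      = ((1 + t) ^ n + (1 - t) ^ n) / 2 := by
  have h1 : (1 + t) ^ n = ∑ j ∈ Finset.range (n + 1), t ^ j * (n.choose j : ℝ) := by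
    rw [add_comm, add_pow]; simp
  have h2 : (1 - t) ^ n = ∑ j ∈ Finset.range (n + 1), (-t) ^ j * (n.choose j : ℝ) := by
    rw [sub_eq_add_neg, add_comm, add_pow]; simp
  have key : ∑ j ∈ Finset.range (n + 1),
      (if Even j then t ^ j * (n.choose j : ℝ) else 0)
      = ((1 + t) ^ n + (1 - t) ^ n) / 2 := by
    rw [h1, h2, ← Finset.sum_add_distrib, Finset.sum_div]
    refine Finset.sum_congr rfl fun j _ => ?_
    rcases Nat.even_or_odd j with hj | hj
    · rw [if_pos hj, hj.neg_pow]; ring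
    · rw [if_neg (by simpa using hj), hj.neg_pow]; ring
  rw [← key, ← Finset.sum_filter]
  refine Finset.sum_nbij' (fun k => 2 * k) (fun j => j / 2) ?_ ?_ ?_ ?_ ?_
  · intro k hk
    simp only [Finset.mem_filter, Finset.mem_range] at *
    exact ⟨by omega, even_two_mul k⟩
  · intro j hj
    simp only [Finset.mem_filter, Finset.mem_range] at *
    omega
  · intro k hk; omega
  · intro j hj
    simp only [Finset.mem_filter, Finset.mem_range] at hj
    obtain ⟨-, ⟨m, hm⟩⟩ := hj; omega
  · intro k hk; ring

theorem binomial_aerated_hausdorff_isStieltjes (a : ℕ → ℝ)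
    (ha : ∃ μ : Measure ℝ, IsFiniteMeasure μ ∧ μ (Set.Icc (0 : ℝ) 1)ᶜ = 0 ∧
      ∀ n : ℕ, a n = ∫ x : ℝ, x ^ n ∂μ)
    (ha0 : a 0 = 1) :
    ∃ ν : Measure ℝ, ν (Set.Icc (0 : ℝ) 2)ᶜ = 0 ∧
      (∀ n : ℕ, Integrable (fun x : ℝ => x ^ n) ν) ∧
      ∀ n : ℕ, (∑ k ∈ Finset.range (n / 2 + 1), (n.choose (2 * k) : ℝ) * a k)
        = ∫ x : ℝ, x ^ n ∂ν := by
  obtain ⟨μ, hfin, hsupp, hmom⟩ := ha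
  have hae : ∀ᵐ x ∂μ, x ∈ Set.Icc (0 : ℝ) 1 := by
    rw [MeasureTheory.ae_iff]
    convert hsupp using 2
    rfl
  set f : ℝ → ℝ := fun x => 1 + Real.sqrt x with hf
  set g : ℝ → ℝ := fun x => 1 - Real.sqrt x with hg
  have hfm : Measurable f := measurable_const.add Real.continuous_sqrt.measurable
  have hgm : Measurable g := measurable_const.sub Real.continuous_sqrt.measurable
  -- ranges
  have hfr : ∀ x ∈ Set.Icc (0 : ℝ) 1, f x ∈ Set.Icc (0 : ℝ) 2 := by
    rintro x ⟨hx0, hx1⟩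
    have h0 := Real.sqrt_nonneg x
    have h1 : Real.sqrt x ≤ 1 := Real.sqrt_le_one.mpr hx1
    constructor <;> simp only [hf] <;> linarith
  have hgr : ∀ x ∈ Set.Icc (0 : ℝ) 1, g x ∈ Set.Icc (0 : ℝ) 2 := by
    rintro x ⟨hx0, hx1⟩
    have h0 := Real.sqrt_nonneg x
    have h1 : Real.sqrt x ≤ 1 := Real.sqrt_le_one.mpr hx1
    constructor <;> simp only [hg] <;> linarith
  -- integrability of composed powers
  have hintf : ∀ n : ℕ, Integrable (fun x => (f x) ^ n) μ := by
    intro n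
    refine (integrable_const ((2:ℝ) ^ n)).mono' ((hfm.pow_const n).aestronglyMeasurable) ?_
    filter_upwards [hae] with x hx
    have h := hfr x hx
    rw [Real.norm_eq_abs, abs_pow, abs_of_nonneg h.1]
    exact pow_le_pow_left₀ h.1 h.2 n
  have hintg : ∀ n : ℕ, Integrable (fun x => (g x) ^ n) μ := by
    intro n
    refine (integrable_const ((2:ℝ) ^ n)).mono' ((hgm.pow_const n).aestronglyMeasurable) ?_
    filter_upwards [hae] with x hx
    have h := hgr x hx
    rw [Real.norm_eq_abs, abs_pow, abs_of_nonneg h.1]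
    exact pow_le_pow_left₀ h.1 h.2 n
  refine ⟨(2 : ENNReal)⁻¹ • (μ.map f + μ.map g), ?_, ?_, ?_⟩
  · rw [Measure.smul_apply, Measure.add_apply,
      Measure.map_apply hfm (measurableSet_Icc.compl),
      Measure.map_apply hgm (measurableSet_Icc.compl)]
    have h1 : μ (f ⁻¹' (Set.Icc (0:ℝ) 2)ᶜ) = 0 := by
      refine measure_mono_null ?_ hsupp
      intro x hx hx'
      exact hx (hfr x hx')
    have h2 : μ (g ⁻¹' (Set.Icc (0:ℝ) 2)ᶜ) = 0 := by
      refine measure_mono_null ?_ hsupp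
      intro x hx hx'
      exact hx (hgr x hx')
    rw [Set.preimage_compl] at h1 h2
    simp [h1, h2]
  · intro n
    have hf' : Integrable (fun x : ℝ => x ^ n) (μ.map f) := by
      rw [integrable_map_measure (by fun_prop) hfm.aemeasurable]
      exact hintf n
    have hg' : Integrable (fun x : ℝ => x ^ n) (μ.map g) := by
      rw [integrable_map_measure (by fun_prop) hgm.aemeasurable]
      exact hintg n
    exact ((hf'.add_measure hg').smul_measure (by simp))
  · intro n
    have hintxk : ∀ k : ℕ, Integrable (fun x : ℝ => x ^ k) μ := by
      intro k
      refine (integrable_const (1:ℝ)).mono' (by fun_prop) ?_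
      filter_upwards [hae] with x hx
      rw [Real.norm_eq_abs, abs_pow]
      exact pow_le_one₀ (abs_nonneg x) (abs_le.2 ⟨by linarith [hx.1], hx.2⟩)
    have hf' : Integrable (fun x : ℝ => x ^ n) (μ.map f) := by
      rw [integrable_map_measure (by fun_prop) hfm.aemeasurable]
      exact hintf n
    have hg' : Integrable (fun x : ℝ => x ^ n) (μ.map g) := by
      rw [integrable_map_measure (by fun_prop) hgm.aemeasurable]
      exact hintg n
    have hmapf : ∫ x, x ^ n ∂(μ.map f) = ∫ x, (f x) ^ n ∂μ :=
      integral_map hfm.aemeasurable (by fun_prop)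
    have hmapg : ∫ x, x ^ n ∂(μ.map g) = ∫ x, (g x) ^ n ∂μ :=
      integral_map hgm.aemeasurable (by fun_prop)
    rw [integral_smul_measure, integral_add_measure hf' hg', hmapf, hmapg]
    have hL : ∑ k ∈ Finset.range (n / 2 + 1), (n.choose (2 * k) : ℝ) * a k
        = ∫ x, (∑ k ∈ Finset.range (n / 2 + 1), (n.choose (2 * k) : ℝ) * x ^ k) ∂μ := by
      rw [integral_finset_sum _ (fun k _ => (hintxk k).const_mul _)]
      refine Finset.sum_congr rfl fun k _ => ?_
      rw [hmom k, integral_const_mul]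
    have hE : ∫ x, (∑ k ∈ Finset.range (n / 2 + 1), (n.choose (2 * k) : ℝ) * x ^ k) ∂μ
        = ∫ x, ((f x) ^ n + (g x) ^ n) / 2 ∂μ := by
      refine integral_congr_ae ?_
      filter_upwards [hae] with x hx
      have hx2 : ∀ k : ℕ, Real.sqrt x ^ (2 * k) = x ^ k := fun k => by
        rw [pow_mul, Real.sq_sqrt hx.1]
      have := aux_even_sum n (Real.sqrt x)
      simp_rw [hx2] at this
      simpa [hf, hg] using this
    rw [hL, hE, integral_div, integral_add (hintf n) (hintg n)]
    simp only [smul_eq_mul]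
    rw [ENNReal.toReal_inv]
    norm_num
    ring
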